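/- Let (R,m) be a Noetherian local ring, I an ideal of R, and M an R-module such that Supp_R(M) ⊆ V(I). Then the intersection over all l ∈ ℕ of the submodules I^l·D(M) of D(M) is zero. -/
import Mathlib


/-- Let `(R, m)` be a noetherian local ring, `E` an injective hull of the
residue field `R/m` and `D = Hom_R(-, E)` the Matlis dual functor.  Let `I` be an ideal
of `R` and `M` an `R`-module with `Supp_R(M) ⊆ V(I)`.  Then
`⋂_{l ∈ ℕ} I^l · D(M) = 0`. -/
theorem stmt7 {R : Type} [CommRing R] [IsNoetherianRing R] [IsLocalRing R]
    (E : Type) [AddCommGroup E] [Module R E] [Module.Injective R E]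
    (e : IsLocalRing.ResidueField R →ₗ[R] E) (he : Function.Injective e)
    (hess : ∀ N : Submodule R E, N ≠ ⊥ → N ⊓ LinearMap.range e ≠ ⊥)
    (I : Ideal R) (M : Type) [AddCommGroup M] [Module R M]
    (hsupp : Module.support R M ⊆ PrimeSpectrum.zeroLocus (I : Set R)) :
    (⨅ l : ℕ, (I ^ l • ⊤ : Submodule R (M →ₗ[R] E))) = ⊥ := by
  rw [eq_bot_iff]
  intro f hf
  simp only [Submodule.mem_iInf] at hf
  rw [Submodule.mem_bot]
  ext x
  -- find n with I^n ≤ Ann(R ∙ x)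
  have hrad : I ≤ (Submodule.span R {x} : Submodule R M).annihilator.radical := by
    rw [Ideal.radical_eq_sInf]
    refine le_sInf ?_
    rintro p ⟨hp1, hp2⟩
    have hmem : (⟨p, hp2⟩ : PrimeSpectrum R) ∈ Module.support R M :=
      Module.mem_support_iff_exists_annihilator.mpr ⟨x, hp1⟩
    exact hsupp hmem
  obtain ⟨n, hn⟩ := Ideal.exists_pow_le_of_le_radical_of_fg hrad
    (IsNoetherian.noetherian I)
  have hfn := hf n
  refine Submodule.smul_induction_on hfn ?_ ?_
  · intro a ha g _
    have hax : a • x = 0 := by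
      have := hn ha
      rw [Submodule.mem_annihilator] at this
      exact this x (Submodule.mem_span_singleton_self x)
    simp [LinearMap.smul_apply, ← g.map_smul, hax]
  · intro g h hg hh
    simp [hg, hh]
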